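/- arXiv:1312.7561 — 8 statements merged into one kernel-verified Lean document; each statement's English description precedes it below -/
import Mathlib

section
/- Let N ≥ 1, let n₁,…,n_N be positive integers, and let R be a nonzero complex number. Consider the complex algebra A = ⊕_{i=1}^N M_{n_i}(ℂ) with Frobenius form ε(a) = R·Σ_{i=1}^N n_i·Tr(a_i) for a = ⊕_i a_i, and define z ∈ A componentwise by z_i = (R·n_i)⁻² · Σ_{l,m,r,s=1}^{n_i} e_{lm}·e_{rs}·e_{ml}·e_{sr} (elementary matrices in the i-th block). Then for every natural number g, R·ε(z^g) = R^{2−2g}·Σ_{i=1}^N n_i^{2−2g} (powers with the integer exponent 2−2g, which is legitimate since R ≠ 0 and n_i ≥ 1). -/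
open Matrix

lemma fhk_quad_sum (k : ℕ) :
    ∑ l : Fin k, ∑ m : Fin k, ∑ r : Fin k, ∑ s : Fin k,
      Matrix.single l m (1 : ℂ) * Matrix.single r s 1 *
        Matrix.single m l 1 * Matrix.single s r 1 = 1 := by
  have hterm : ∀ l m r s : Fin k,
      Matrix.single l m (1 : ℂ) * Matrix.single r s 1 *
        Matrix.single m l 1 * Matrix.single s r 1
      = if l = m then (if m = r then (if r = s then Matrix.single l l 1 else 0) else 0)
          else 0 := by
    intro l m r s
    by_cases hmr : m = r
    · subst hmr
      rw [single_mul_single_same]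
      by_cases hsm : s = m
      · subst hsm
        rw [single_mul_single_same]
        by_cases hlm : l = s
        · subst hlm
          rw [single_mul_single_same]
          simp
        · rw [single_mul_single_of_ne (h := hlm)]
          simp [hlm]
      · rw [single_mul_single_of_ne (h := hsm), zero_mul]
        simp [Ne.symm hsm]
    · rw [single_mul_single_of_ne (h := hmr), zero_mul, zero_mul]
      simp [hmr]
  simp only [hterm, Finset.sum_ite_eq, Finset.mem_univ, if_true]
  ext a b
  simp [Matrix.sum_apply, Matrix.single, Matrix.one_apply]
  by_cases h : a = b
  · subst h
    simp [and_self, Finset.filter_eq']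
  · rw [if_neg h]
    have he : (Finset.filter (fun x => x = a ∧ x = b) Finset.univ) = ∅ := by
      apply Finset.filter_false_of_mem
      rintro x - ⟨rfl, rfl⟩
      exact h rfl
    simp [he]

lemma fhk_term_eq (R c : ℂ) (hR : R ≠ 0) (hc : c ≠ 0) (g : ℕ) :
    R * (R * (c * (((R * c) ^ (-2 : ℤ)) ^ g * c)))
      = R ^ ((2 : ℤ) - 2 * (g : ℤ)) * c ^ ((2 : ℤ) - 2 * (g : ℤ)) := by
  have h1 : ((R * c) ^ (-2 : ℤ)) ^ g = (R * c) ^ ((-2 : ℤ) * g) := by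
    rw [← zpow_natCast ((R * c) ^ (-2 : ℤ)), ← _root_.zpow_mul]
  rw [h1, mul_zpow]
  have e : (2 : ℤ) - 2 * g = 2 + (-2) * g := by ring
  rw [e, zpow_add₀ hR, zpow_add₀ hc]
  simp only [show ((2:ℤ)) = ((2:ℕ):ℤ) by norm_num, zpow_natCast]
  ring

/-- For the FHK state sum model on `A = ⊕ᵢ M_{nᵢ}(ℂ)` with Frobenius form
`ε(a) = R ∑ᵢ nᵢ Tr(aᵢ)` and handle element `z` with
`zᵢ = (Rnᵢ)⁻² ∑_{l,m,r,s} e_{lm} e_{rs} e_{ml} e_{sr}`,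
the partition function satisfies `R ε(z^g) = R^{2-2g} ∑ᵢ nᵢ^{2-2g}`. -/
theorem fhk_partition_function_complex
    (N : ℕ) (hN : 1 ≤ N) (n : Fin N → ℕ) (hn : ∀ i, 0 < n i)
    (R : ℂ) (hR : R ≠ 0)
    (z : ∀ i : Fin N, Matrix (Fin (n i)) (Fin (n i)) ℂ)
    (hz : ∀ i, z i = ((R * (n i : ℂ)) ^ (-2 : ℤ)) •
        ∑ l : Fin (n i), ∑ m : Fin (n i), ∑ r : Fin (n i), ∑ s : Fin (n i),
          Matrix.single l m (1 : ℂ) * Matrix.single r s 1 *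
            Matrix.single m l 1 * Matrix.single s r 1)
    (g : ℕ) :
    R * (R * ∑ i : Fin N, (n i : ℂ) * ((z ^ g) i).trace)
      = R ^ ((2 : ℤ) - 2 * (g : ℤ)) * ∑ i : Fin N, (n i : ℂ) ^ ((2 : ℤ) - 2 * (g : ℤ)) := by
  have hz' : ∀ i, z i = ((R * (n i : ℂ)) ^ (-2 : ℤ)) • (1 : Matrix (Fin (n i)) (Fin (n i)) ℂ) :=
    fun i => by rw [hz i, fhk_quad_sum]
  have htr : ∀ i : Fin N, ((z ^ g) i).trace = ((R * (n i : ℂ)) ^ (-2 : ℤ)) ^ g * (n i : ℂ) := by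
    intro i
    have : (z ^ g) i = (z i) ^ g := rfl
    rw [this, hz' i, smul_pow, one_pow, trace_smul, trace_one]
    simp
  calc R * (R * ∑ i : Fin N, (n i : ℂ) * ((z ^ g) i).trace)
      = ∑ i : Fin N, R * (R * ((n i : ℂ) * (((R * (n i : ℂ)) ^ (-2 : ℤ)) ^ g * (n i : ℂ)))) := by
        rw [Finset.mul_sum, Finset.mul_sum]
        exact Finset.sum_congr rfl fun i _ => by rw [htr i]
    _ = ∑ i : Fin N, R ^ ((2 : ℤ) - 2 * (g : ℤ)) * (n i : ℂ) ^ ((2 : ℤ) - 2 * (g : ℤ)) := by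
        refine Finset.sum_congr rfl fun i _ => ?_
        exact fhk_term_eq R (n i : ℂ) hR (Nat.cast_ne_zero.mpr (hn i).ne') g
    _ = R ^ ((2 : ℤ) - 2 * (g : ℤ)) * ∑ i : Fin N, (n i : ℂ) ^ ((2 : ℤ) - 2 * (g : ℤ)) := by
        rw [Finset.mul_sum]
end

section
/- Let n ≥ 1 and let R be a nonzero real number. Regard A = Mₙ(ℍ) as an algebra over ℝ with Frobenius form ε(a) = 4Rn·re(Tr(a)), and define z = (4Rn)⁻² · Σ_{w,t ∈ {1,î,ĵ,k̂}} Σ_{l,m,r,s=1}^{n} (w·e_{lm})·(t·e_{rs})·(w̄·e_{ml})·(t̄·e_{sr}). Then z = (4R²n²)⁻¹·1, and for every natural number g, R·ε(z^g) = 2^{2−2g}·R^{2−2g}·n^{2−2g}. -/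
open Quaternion Matrix

lemma fhk_key {n : ℕ} (l m r s : Fin n) (a b c d : ℍ[ℝ]) :
    Matrix.single l m a * Matrix.single r s b * Matrix.single m l c * Matrix.single s r d
    = if m = r then (if s = m then (if l = m then Matrix.single l l (a*b*c*d) else 0) else 0)
      else 0 := by
  by_cases h1 : m = r
  · subst h1
    by_cases h2 : s = m
    · subst h2
      by_cases h3 : l = s
      · subst h3
        simp [Matrix.single_mul_single_same, mul_assoc]
      · rw [Matrix.single_mul_single_same, Matrix.single_mul_single_same,
          Matrix.single_mul_single_of_ne (c := a*b*c) (h := h3) (d := d)]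
        simp [h3]
    · rw [Matrix.single_mul_single_same, Matrix.single_mul_single_of_ne (c := a*b) (h := h2) (d := c)]
      simp [h2]
  · rw [Matrix.single_mul_single_of_ne (c := a) (h := h1) (d := b)]
    simp [h1]

lemma fhk_sum_diag {n : ℕ} (q : ℍ[ℝ]) :
    ∑ l : Fin n, Matrix.single l l q = Matrix.diagonal (fun _ => q) := by
  apply Matrix.ext; intro i j
  simp only [Matrix.sum_apply, Matrix.single, Matrix.diagonal, Matrix.of_apply]
  by_cases h : i = j
  · subst h; simp
  · rw [if_neg h, Finset.sum_eq_zero]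
    intro x _
    rw [if_neg]
    rintro ⟨rfl, rfl⟩; exact h rfl

lemma fhk_sum4 {n : ℕ} (a b c d : ℍ[ℝ]) :
    ∑ l : Fin n, ∑ m : Fin n, ∑ r : Fin n, ∑ s : Fin n,
      (Matrix.single l m a * Matrix.single r s b * Matrix.single m l c * Matrix.single s r d)
    = Matrix.diagonal (fun _ => a * b * c * d) := by
  rw [← fhk_sum_diag]
  simp only [fhk_key, Finset.sum_ite_irrel, Finset.sum_const_zero, Finset.sum_ite_eq,
    Finset.sum_ite_eq', Finset.mem_univ, if_true]

lemma fhk_diag_sum {n : ℕ} {ι : Type*} (s : Finset ι) (f : ι → ℍ[ℝ]) :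
    ∑ x ∈ s, Matrix.diagonal (fun _ : Fin n => f x)
      = Matrix.diagonal (fun _ => ∑ x ∈ s, f x) := by
  apply Matrix.ext; intro i j
  by_cases h : i = j <;> simp [Matrix.sum_apply, Matrix.diagonal, h]

lemma fhk_qsum :
    (∑ w : Fin 4, ∑ t : Fin 4,
      (![1, (⟨0,1,0,0⟩ : ℍ[ℝ]), ⟨0,0,1,0⟩, ⟨0,0,0,1⟩] w *
       ![1, (⟨0,1,0,0⟩ : ℍ[ℝ]), ⟨0,0,1,0⟩, ⟨0,0,0,1⟩] t *
       star (![1, (⟨0,1,0,0⟩ : ℍ[ℝ]), ⟨0,0,1,0⟩, ⟨0,0,0,1⟩] w) *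
       star (![1, (⟨0,1,0,0⟩ : ℍ[ℝ]), ⟨0,0,1,0⟩, ⟨0,0,0,1⟩] t)))
    = ((4 : ℝ) : ℍ[ℝ]) := by
  ext <;>
    simp [Fin.sum_univ_four, Quaternion.ext_iff, Quaternion.re_mul, Quaternion.imI_mul,
      Quaternion.imJ_mul, Quaternion.imK_mul] <;> norm_num

/-- For the FHK state sum model on the real algebra `Mₙ(ℍ)` with Frobenius form
`ε(a) = 4Rn · re(Tr a)` and handle element
`z = (4Rn)⁻² ∑_{w,t ∈ {1,î,ĵ,k̂}} ∑_{l,m,r,s} (w e_{lm})(t e_{rs})(w̄ e_{ml})(t̄ e_{sr})`,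
one has `z = (4R²n²)⁻¹ • 1` and `R ε(z^g) = 2^{2-2g} R^{2-2g} n^{2-2g}`. -/
theorem fhk_partition_function_quaternionic
    (n : ℕ) (hn : 1 ≤ n) (R : ℝ) (hR : R ≠ 0)
    (u : Fin 4 → ℍ[ℝ])
    (hu : u = ![1, (⟨0, 1, 0, 0⟩ : ℍ[ℝ]), (⟨0, 0, 1, 0⟩ : ℍ[ℝ]), (⟨0, 0, 0, 1⟩ : ℍ[ℝ])])
    (z : Matrix (Fin n) (Fin n) ℍ[ℝ])
    (hz : z = ((4 * R * (n : ℝ)) ^ (-2 : ℤ)) •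
        ∑ w : Fin 4, ∑ t : Fin 4, ∑ l : Fin n, ∑ m : Fin n, ∑ r : Fin n, ∑ s : Fin n,
          (u w • Matrix.single l m (1 : ℍ[ℝ])) * (u t • Matrix.single r s 1) *
            (star (u w) • Matrix.single m l 1) * (star (u t) • Matrix.single s r 1)) :
    z = ((4 * R ^ 2 * (n : ℝ) ^ 2)⁻¹) • (1 : Matrix (Fin n) (Fin n) ℍ[ℝ]) ∧
      ∀ g : ℕ, R * (4 * R * (n : ℝ) * ((z ^ g).trace).re)
        = 2 ^ ((2 : ℤ) - 2 * (g : ℤ)) * R ^ ((2 : ℤ) - 2 * (g : ℤ)) *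
            (n : ℝ) ^ ((2 : ℤ) - 2 * (g : ℤ)) := by
  have hn0 : (n : ℝ) ≠ 0 := Nat.cast_ne_zero.mpr (by omega)
  -- Step 1: z = (4R²n²)⁻¹ • 1
  have h1 : z = ((4 * R ^ 2 * (n : ℝ) ^ 2)⁻¹) • (1 : Matrix (Fin n) (Fin n) ℍ[ℝ]) := by
    have hsum : (∑ w : Fin 4, ∑ t : Fin 4, ∑ l : Fin n, ∑ m : Fin n, ∑ r : Fin n, ∑ s : Fin n,
          (u w • Matrix.single l m (1 : ℍ[ℝ])) * (u t • Matrix.single r s 1) *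
            (star (u w) • Matrix.single m l 1) * (star (u t) • Matrix.single s r 1))
        = (4 : ℝ) • (1 : Matrix (Fin n) (Fin n) ℍ[ℝ]) := by
      have e1 : ∀ w t : Fin 4,
          (∑ l : Fin n, ∑ m : Fin n, ∑ r : Fin n, ∑ s : Fin n,
            (u w • Matrix.single l m (1 : ℍ[ℝ])) * (u t • Matrix.single r s 1) *
              (star (u w) • Matrix.single m l 1) * (star (u t) • Matrix.single s r 1))
          = Matrix.diagonal (fun _ => u w * u t * star (u w) * star (u t)) := by
        intro w t
        simp only [Matrix.smul_single, smul_eq_mul, mul_one]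
        exact fhk_sum4 _ _ _ _
      simp only [e1, fhk_diag_sum]
      rw [hu]; erw [fhk_qsum]
      apply Matrix.ext; intro i j
      by_cases h : i = j <;>
        simp [Matrix.diagonal, Matrix.one_apply, h, Quaternion.ext_iff]
    rw [hz, hsum, smul_smul]
    congr 1
    have h4 : (4 * R * (n : ℝ)) ≠ 0 := by positivity
    rw [show ((4 : ℝ) * R * n) ^ (-2 : ℤ) = (((4 : ℝ) * R * n) * ((4 : ℝ) * R * n))⁻¹ by
      rw [_root_.zpow_neg, zpow_two]]
    field_simp
  refine ⟨h1, fun g => ?_⟩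
  -- Step 2: the partition function
  set c : ℝ := 4 * R ^ 2 * (n : ℝ) ^ 2 with hc
  have hc0 : c ≠ 0 := by positivity
  have hzg : z ^ g = ((c⁻¹) ^ g) • (1 : Matrix (Fin n) (Fin n) ℍ[ℝ]) := by
    rw [h1, smul_pow, one_pow]
  have htr : ((z ^ g).trace).re = (c⁻¹) ^ g * n := by
    rw [hzg, Matrix.trace_smul, Matrix.trace_one]
    simp [Quaternion.re_smul]
  rw [htr]
  have hL : R * (4 * R * (n : ℝ) * ((c⁻¹) ^ g * n)) = c ^ ((1 : ℤ) - g) := by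
    rw [zpow_sub₀ hc0, zpow_one, zpow_natCast]
    rw [inv_pow, hc]
    ring
  rw [hL]
  have h2 : (2 : ℝ) ^ ((2 : ℤ) - 2 * (g : ℤ)) = ((2 : ℝ) ^ (2 : ℤ)) ^ ((1 : ℤ) - g) := by
    rw [← _root_.zpow_mul]; ring_nf
  have hr : R ^ ((2 : ℤ) - 2 * (g : ℤ)) = (R ^ (2 : ℤ)) ^ ((1 : ℤ) - g) := by
    rw [← _root_.zpow_mul]; ring_nf
  have hn2 : (n : ℝ) ^ ((2 : ℤ) - 2 * (g : ℤ)) = ((n : ℝ) ^ (2 : ℤ)) ^ ((1 : ℤ) - g) := by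
    rw [← _root_.zpow_mul]; ring_nf
  rw [h2, hr, hn2, ← mul_zpow, ← mul_zpow]
  congr 1
  rw [hc]
  simp only [zpow_two]
  ring
end

section
/- Let k be a field, let A be a finite-dimensional associative unital k-algebra, and let ε : A → k be a linear functional such that the bilinear form (a,b) ↦ ε(a·b) is nondegenerate. Suppose there are finitely many pairs (y_i, z_i) of elements of A with Σ_i ε(a·y_i)·z_i = a for every a ∈ A, and a nonzero scalar R ∈ k with R·Σ_i y_i·z_i = 1. Then the element t = R·Σ_i y_i ⊗ z_i of A ⊗_k A satisfies (i) the multiplication map A ⊗_k A → A sends t to 1, and (ii) for every x ∈ A, Σ_i (x·y_i) ⊗ z_i = Σ_i y_i ⊗ (z_i·x). In other words, A is a separable algebra with separability idempotent t. -/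
open scoped TensorProduct

/-- A special Frobenius algebra is separable: if `ε` is a Frobenius form on `A`, the pairs
`(yᵢ, zᵢ)` represent the inverse `B = ∑ᵢ yᵢ ⊗ zᵢ` of the bilinear form `(a,b) ↦ ε(a·b)`
(i.e. `∑ᵢ ε(a·yᵢ)·zᵢ = a` for all `a`), and `R·∑ᵢ yᵢ·zᵢ = 1` with `R ≠ 0`, then
`t = R • ∑ᵢ yᵢ ⊗ zᵢ` satisfies `m(t) = 1` and `x ▷ t = t ◁ x` for all `x`. -/
theorem special_frobenius_is_separable
    (k : Type*) [Field k] (A : Type*) [Ring A] [Algebra k A] [FiniteDimensional k A]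
    (ε : A →ₗ[k] k)
    (hnd₁ : ∀ a : A, (∀ b : A, ε (a * b) = 0) → a = 0)
    (hnd₂ : ∀ b : A, (∀ a : A, ε (a * b) = 0) → b = 0)
    (ι : Type*) (s : Finset ι) (y z : ι → A)
    (hB : ∀ a : A, ∑ i ∈ s, ε (a * y i) • z i = a)
    (R : k) (hR : R ≠ 0) (hunit : R • ∑ i ∈ s, y i * z i = 1) :
    (LinearMap.mul' k A) (R • ∑ i ∈ s, y i ⊗ₜ[k] z i) = 1 ∧
      ∀ x : A, (R • ∑ i ∈ s, (x * y i) ⊗ₜ[k] z i) = R • ∑ i ∈ s, y i ⊗ₜ[k] (z i * x) := by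
  have aux : ∀ a : A, ∑ i ∈ s, ε (z i * a) • y i = a := by
    intro a
    have key : ∀ c : A, ε (c * (∑ i ∈ s, ε (z i * a) • y i - a)) = 0 := by
      intro c
      have h1 : ε (c * a) = ∑ i ∈ s, ε (c * y i) * ε (z i * a) := by
        conv_lhs => rw [← hB c]
        rw [Finset.sum_mul, map_sum]
        refine Finset.sum_congr rfl fun i _ => ?_
        rw [smul_mul_assoc, map_smul, smul_eq_mul, mul_comm]
      rw [mul_sub, map_sub, Finset.mul_sum, map_sum, h1, sub_eq_zero]
      refine Finset.sum_congr rfl fun i _ => ?_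
      rw [mul_smul_comm, map_smul, smul_eq_mul, mul_comm]
    exact sub_eq_zero.mp (hnd₂ _ key)
  constructor
  · rw [map_smul, map_sum]
    simp only [LinearMap.mul'_apply]
    exact hunit
  · intro x
    congr 1
    calc ∑ i ∈ s, (x * y i) ⊗ₜ[k] z i
        = ∑ i ∈ s, ∑ j ∈ s, ε (z j * (x * y i)) • (y j ⊗ₜ[k] z i) := by
          refine Finset.sum_congr rfl fun i _ => ?_
          conv_lhs => rw [← aux (x * y i)]
          rw [TensorProduct.sum_tmul]
          exact Finset.sum_congr rfl fun j _ => by rw [TensorProduct.smul_tmul']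
      _ = ∑ j ∈ s, ∑ i ∈ s, ε (z j * (x * y i)) • (y j ⊗ₜ[k] z i) := Finset.sum_comm
      _ = ∑ j ∈ s, y j ⊗ₜ[k] (z j * x) := by
          refine Finset.sum_congr rfl fun j _ => ?_
          conv_rhs => rw [← hB (z j * x)]
          rw [TensorProduct.tmul_sum]
          refine Finset.sum_congr rfl fun i _ => ?_
          rw [TensorProduct.tmul_smul, mul_assoc]
end

section
/- Let A be a finite-dimensional associative unital ℂ-algebra and ε : A → ℂ a linear functional whose associated bilinear form (a,b) ↦ ε(a·b) is nondegenerate. Suppose there are finitely many pairs (y_i, z_i) of elements of A with Σ_i ε(a·y_i)·z_i = a for every a ∈ A, and a nonzero scalar R ∈ ℂ with R·Σ_i y_i·z_i = 1. Then A is a semisimple ring. -/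
/-- A special Frobenius algebra over `ℂ` is semisimple: if `ε` is a Frobenius form on `A`,
the pairs `(yᵢ, zᵢ)` represent the inverse of the bilinear form `(a,b) ↦ ε(a·b)`, and
`R·∑ᵢ yᵢ·zᵢ = 1` with `R ≠ 0`, then `A` is a semisimple ring. -/
theorem special_frobenius_complex_is_semisimple
    (A : Type*) [Ring A] [Algebra ℂ A] [FiniteDimensional ℂ A]
    (ε : A →ₗ[ℂ] ℂ)
    (hnd₁ : ∀ a : A, (∀ b : A, ε (a * b) = 0) → a = 0)
    (hnd₂ : ∀ b : A, (∀ a : A, ε (a * b) = 0) → b = 0)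
    (ι : Type*) (s : Finset ι) (y z : ι → A)
    (hB : ∀ a : A, ∑ i ∈ s, ε (a * y i) • z i = a)
    (R : ℂ) (hR : R ≠ 0) (hunit : R • ∑ i ∈ s, y i * z i = 1) :
    IsSemisimpleRing A := by
  -- the dual expansion: ∑ ε(zᵢ a) • yᵢ = a
  have hstar : ∀ a : A, ∑ i ∈ s, ε (z i * a) • y i = a := by
    intro a
    rw [← sub_eq_zero]
    apply hnd₂
    intro c
    have h1 : ε (c * ∑ i ∈ s, ε (z i * a) • y i) = ∑ i ∈ s, ε (c * y i) * ε (z i * a) := by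
      rw [Finset.mul_sum, map_sum]
      refine Finset.sum_congr rfl fun i _ => ?_
      rw [mul_smul_comm, map_smul, smul_eq_mul, mul_comm]
    have h2 : ε ((∑ i ∈ s, ε (c * y i) • z i) * a) = ∑ i ∈ s, ε (c * y i) * ε (z i * a) := by
      rw [Finset.sum_mul, map_sum]
      refine Finset.sum_congr rfl fun i _ => ?_
      rw [smul_mul_assoc, map_smul, smul_eq_mul]
    rw [mul_sub, map_sub, h1, ← h2, hB c, sub_self]
  refine (isSemisimpleModule_iff A A).mpr ⟨?_⟩
  intro N
  -- choose a ℂ-linear projection onto N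
  obtain ⟨N', hN'⟩ := Submodule.exists_isCompl (N.restrictScalars ℂ)
  set p : A →ₗ[ℂ] A :=
    (N.restrictScalars ℂ).subtype ∘ₗ (N.restrictScalars ℂ).linearProjOfIsCompl N' hN' with hp
  have hpmem : ∀ x : A, p x ∈ N := fun x => ((N.restrictScalars ℂ).linearProjOfIsCompl N' hN' x).2
  have hpid : ∀ x ∈ N, p x = x := fun x hx => by
    exact congrArg Subtype.val (Submodule.projectionOnto_apply_of_mem_left hN' (x := x) hx)
  -- averaged A-linear projection
  have casimir : ∀ a m : A,
      ∑ i ∈ s, y i * p (z i * (a * m)) = a * ∑ i ∈ s, y i * p (z i * m) := by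
    intro a m
    have expand : ∀ i, a * y i = ∑ j ∈ s, ε (z j * (a * y i)) • y j := by
      intro i
      exact (hstar (a * y i)).symm
    calc ∑ i ∈ s, y i * p (z i * (a * m))
        = ∑ j ∈ s, y j * p ((∑ i ∈ s, ε ((z j * a) * y i) • z i) * m) := by
          refine Finset.sum_congr rfl fun j _ => ?_
          rw [hB (z j * a), mul_assoc]
      _ = ∑ j ∈ s, ∑ i ∈ s, ε ((z j * a) * y i) • (y j * p (z i * m)) := by
          refine Finset.sum_congr rfl fun j _ => ?_
          rw [Finset.sum_mul]
          simp_rw [smul_mul_assoc]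
          rw [map_sum, Finset.mul_sum]
          refine Finset.sum_congr rfl fun i _ => by rw [map_smul, mul_smul_comm]
      _ = ∑ i ∈ s, ∑ j ∈ s, ε (z j * (a * y i)) • y j * p (z i * m) := by
          rw [Finset.sum_comm]
          refine Finset.sum_congr rfl fun i _ => Finset.sum_congr rfl fun j _ => ?_
          rw [mul_assoc, smul_mul_assoc]
      _ = ∑ i ∈ s, (a * y i) * p (z i * m) := by
          refine Finset.sum_congr rfl fun i _ => ?_
          rw [← Finset.sum_mul, ← expand i]
      _ = a * ∑ i ∈ s, y i * p (z i * m) := by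
          rw [Finset.mul_sum]
          exact Finset.sum_congr rfl fun i _ => (mul_assoc _ _ _)
  set P : A →ₗ[A] A :=
    { toFun := fun m => R • ∑ i ∈ s, y i * p (z i * m)
      map_add' := fun m n => by
        show R • ∑ i ∈ s, y i * p (z i * (m + n)) = _
        simp only [mul_add, map_add]
        rw [Finset.sum_add_distrib, smul_add]
      map_smul' := fun a m => by
        simp only [smul_eq_mul, RingHom.id_apply]
        rw [casimir a m, mul_smul_comm] } with hP
  have hPmem : ∀ x : A, P x ∈ N := by
    intro x
    refine Submodule.smul_of_tower_mem N R (Submodule.sum_mem N fun i _ => ?_)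
    exact N.smul_mem (y i) (hpmem _)
  have hPid : ∀ x ∈ N, P x = x := by
    intro x hx
    have : ∀ i ∈ s, y i * p (z i * x) = (y i * z i) * x := fun i _ => by
      rw [hpid _ (show z i * x ∈ N from N.smul_mem (z i) hx), mul_assoc]
    simp only [hP, LinearMap.coe_mk, AddHom.coe_mk]
    rw [Finset.sum_congr rfl this, ← Finset.sum_mul, ← smul_mul_assoc, hunit, one_mul]
  have hproj : LinearMap.IsProj N P := ⟨hPmem, hPid⟩
  exact ⟨LinearMap.ker P, hproj.isCompl⟩
end

section
/- Let n ≥ 1, let R be a nonzero complex number, and let x ∈ Mₙ(ℂ) be invertible. Suppose the Frobenius form ε(a) = Tr(x·a) is symmetric, i.e. Tr(x·a·b) = Tr(x·b·a) for all a, b ∈ Mₙ(ℂ), and suppose R·Tr(x⁻¹) = 1. Then x = R·n·1, i.e. ε(a) = R·n·Tr(a) for all a. -/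
open Matrix

lemma trace_mul_std {n : ℕ} (M : Matrix (Fin n) (Fin n) ℂ) (i j : Fin n) :
    (M * Matrix.single i j 1).trace = M j i := by
  simp [Matrix.trace, Matrix.diag, Matrix.mul_apply, Matrix.single, ite_and,
    Finset.sum_ite_eq, Finset.sum_ite_eq', eq_comm]

/-- If the Frobenius form `ε(a) = Tr(x·a)` on `Mₙ(ℂ)` is symmetric and satisfies the special
condition `R·Tr(x⁻¹) = 1`, then `x = Rn·1`, i.e. `ε(a) = Rn·Tr(a)`. -/
theorem symmetric_special_frobenius_form_on_matrix_algebra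
    (n : ℕ) (hn : 1 ≤ n) (R : ℂ) (hR : R ≠ 0)
    (x : Matrix (Fin n) (Fin n) ℂ) (hx : IsUnit x)
    (hsymm : ∀ a b : Matrix (Fin n) (Fin n) ℂ, (x * a * b).trace = (x * b * a).trace)
    (hspec : R * (x⁻¹).trace = 1) :
    x = (R * (n : ℂ)) • (1 : Matrix (Fin n) (Fin n) ℂ) := by
  have hcomm : ∀ a : Matrix (Fin n) (Fin n) ℂ, x * a = a * x := by
    intro a
    ext j i
    have h := hsymm a (Matrix.single i j 1)
    rw [trace_mul_std (x * a) i j] at h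
    have h2 : (x * Matrix.single i j 1 * a).trace = ((a * x) * Matrix.single i j 1).trace := by
      rw [Matrix.trace_mul_comm, mul_assoc]
    rw [h2, trace_mul_std (a * x) i j] at h
    exact h
  obtain ⟨c, hc⟩ := mem_range_scalar_of_commute_single
    (M := x) (fun i j _ => ((hcomm _).symm : _))
  have hxc : x = c • (1 : Matrix (Fin n) (Fin n) ℂ) := by
    rw [← hc]; simp [Matrix.scalar, Matrix.smul_one_eq_diagonal]
  have hc0 : c ≠ 0 := by
    rintro rfl
    rw [zero_smul] at hxc
    obtain ⟨u, hu⟩ := hx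
    have h1 : (1 : Matrix (Fin n) (Fin n) ℂ) = 0 := by
      calc (1 : Matrix (Fin n) (Fin n) ℂ) = ↑u * ↑u⁻¹ := (u.mul_inv).symm
      _ = 0 := by rw [hu, hxc, zero_mul]
    have := congrArg Matrix.trace h1
    simp at this
    omega
  have hinv : x⁻¹ = c⁻¹ • (1 : Matrix (Fin n) (Fin n) ℂ) := by
    apply Matrix.inv_eq_right_inv
    rw [hxc, smul_mul_smul_comm, one_mul, mul_inv_cancel₀ hc0, one_smul]
  have htr : (x⁻¹).trace = c⁻¹ * n := by
    rw [hinv]; simp [Matrix.trace_smul, mul_comm]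
  rw [htr] at hspec
  have hcval : c = R * n := by
    field_simp at hspec
    exact hspec.symm
  rw [hxc, hcval]
end

section
/- Let k be a field of characteristic different from 2, V a finite-dimensional k-vector space, b : V × V → k a nondegenerate bilinear form, and σ : V → V a linear map satisfying b(x,y) = b(σ(y),x) for all x, y ∈ V. Define the subspaces V₊ = {v ∈ V : b(v,w) = b(w,v) for all w ∈ V} and V₋ = {v ∈ V : b(v,w) = −b(w,v) for all w ∈ V}. Then σ∘σ = id if and only if V is the internal direct sum V₊ ⊕ V₋. -/
/-- Spherical condition lemma: for a nondegenerate bilinear form `b` on a finite-dimensional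
vector space `V` over a field of characteristic `≠ 2`, with `σ` satisfying
`b(x,y) = b(σ(y),x)`, one has `σ∘σ = id` iff `V` is the internal direct sum of the subspace
`V₊` of vectors `v` with `b(v,·) = b(·,v)` and the subspace `V₋` of vectors `v` with
`b(v,·) = −b(·,v)`, i.e. iff `ker (b - b.flip)` and `ker (b + b.flip)` are complementary. -/
theorem nakayama_squared_id_iff_symmetric_antisymmetric_decomposition
    (k : Type*) [Field k] (hchar : (2 : k) ≠ 0)
    (V : Type*) [AddCommGroup V] [Module k V] [FiniteDimensional k V]
    (b : V →ₗ[k] V →ₗ[k] k)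
    (hnd : ∀ v : V, (∀ w : V, b v w = 0) → v = 0)
    (σ : V →ₗ[k] V) (hσ : ∀ x y : V, b x y = b (σ y) x) :
    σ ∘ₗ σ = LinearMap.id ↔
      IsCompl (LinearMap.ker (b - b.flip)) (LinearMap.ker (b + b.flip)) := by
  have hfix : ∀ v : V, v ∈ LinearMap.ker (b - b.flip) ↔ σ v = v := by
    intro v
    rw [LinearMap.mem_ker]
    constructor
    · intro h
      have h' : ∀ w : V, b v w = b w v := by
        intro w
        have := congrArg (fun f => f w) h
        simpa [sub_eq_zero] using this
      have : σ v - v = 0 := by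
        apply hnd
        intro w
        rw [map_sub, LinearMap.sub_apply, ← hσ w v, h' w, sub_self]
      exact sub_eq_zero.mp this
    · intro h
      ext w
      have : b w v = b (σ v) w := hσ w v
      rw [h] at this
      simp [this]
  have hneg : ∀ v : V, v ∈ LinearMap.ker (b + b.flip) ↔ σ v = -v := by
    intro v
    rw [LinearMap.mem_ker]
    constructor
    · intro h
      have h' : ∀ w : V, b v w + b w v = 0 := by
        intro w
        have := congrArg (fun f => f w) h
        simpa using this
      have : σ v + v = 0 := by
        apply hnd
        intro w
        rw [map_add, LinearMap.add_apply, ← hσ w v]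
        linear_combination h' w
      exact eq_neg_of_add_eq_zero_left this
    · intro h
      ext w
      have h1 : b w v = b (σ v) w := hσ w v
      rw [h, map_neg, LinearMap.neg_apply] at h1
      simp [h1]
  constructor
  · intro h2
    have hσ2 : ∀ v : V, σ (σ v) = v := by
      intro v
      have := LinearMap.ext_iff.mp h2 v
      simpa using this
    constructor
    · rw [disjoint_iff]
      ext v
      simp only [Submodule.mem_inf, Submodule.mem_bot]
      constructor
      · rintro ⟨h1, h3⟩
        have e1 := (hfix v).mp h1
        have e2 := (hneg v).mp h3
        have : (2 : k) • v = 0 := by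
          rw [two_smul]
          nth_rewrite 1 [← e1]
          rw [e2]
          abel
        have := smul_eq_zero.mp this
        tauto
      · rintro rfl
        simp
    · rw [codisjoint_iff, eq_top_iff]
      intro v _
      have hv : v = (2 : k)⁻¹ • (v + σ v) + (2 : k)⁻¹ • (v - σ v) := by
        rw [← smul_add]
        have : v + σ v + (v - σ v) = (2 : k) • v := by
          rw [two_smul]; abel
        rw [this, smul_smul, inv_mul_cancel₀ hchar, one_smul]
      rw [hv]
      apply Submodule.add_mem_sup
      · apply Submodule.smul_mem
        rw [hfix]
        rw [map_add, hσ2]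
        abel
      · apply Submodule.smul_mem
        rw [hneg]
        rw [map_sub, hσ2]
        abel
  · intro hc
    ext v
    have hv : v ∈ LinearMap.ker (b - b.flip) ⊔ LinearMap.ker (b + b.flip) := by
      rw [codisjoint_iff.mp hc.2]; trivial
    obtain ⟨p, hp, q, hq, rfl⟩ := Submodule.mem_sup.mp hv
    have ep := (hfix p).mp hp
    have eq' := (hneg q).mp hq
    simp [map_add, ep, eq']
end

section
/- Let A be a finite-dimensional associative unital ℂ-algebra and ε : A → ℂ a linear functional whose associated bilinear form (a,b) ↦ ε(a·b) is nondegenerate. Suppose there are finitely many pairs (y_i, z_i) in A with Σ_i ε(a·y_i)·z_i = a for all a ∈ A and a nonzero R ∈ ℂ with R·Σ_i y_i·z_i = 1. Let σ : A → A be the linear map determined by ε(x·y) = ε(σ(y)·x) for all x, y. Then σ is an inner automorphism: there exists an invertible element u ∈ A such that σ(a) = u⁻¹·a·u for all a ∈ A. -/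
/-- The Nakayama automorphism of a special Frobenius algebra over `ℂ` is inner: there is an
invertible `u ∈ A` with `σ(a) = u⁻¹·a·u` for all `a`. -/
theorem nakayama_automorphism_is_inner
    (A : Type*) [Ring A] [Algebra ℂ A] [FiniteDimensional ℂ A]
    (ε : A →ₗ[ℂ] ℂ)
    (hnd₁ : ∀ a : A, (∀ b : A, ε (a * b) = 0) → a = 0)
    (hnd₂ : ∀ b : A, (∀ a : A, ε (a * b) = 0) → b = 0)
    (ι : Type*) (s : Finset ι) (y z : ι → A)
    (hB : ∀ a : A, ∑ i ∈ s, ε (a * y i) • z i = a)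
    (R : ℂ) (hR : R ≠ 0) (hunit : R • ∑ i ∈ s, y i * z i = 1)
    (σ : A →ₗ[ℂ] A) (hσ : ∀ x y : A, ε (x * y) = ε (σ y * x)) :
    ∃ u : Aˣ, ∀ a : A, σ a = (↑u⁻¹ : A) * a * (↑u : A) := by
  classical
  set w : A := ∑ i ∈ s, z i * y i with hw
  -- key double-expansion lemma
  have key : ∀ p q : A, ∑ i ∈ s, ε (p * (q * (z i * y i)))
      = ∑ i ∈ s, ∑ j ∈ s, ε (q * (z i * y j)) * ε (p * (z j * y i)) := by
    intro p q
    refine Finset.sum_congr rfl fun i _ => ?_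
    have h1 : q * z i = ∑ j ∈ s, ε ((q * z i) * y j) • z j := (hB (q * z i)).symm
    calc ε (p * (q * (z i * y i))) = ε (p * ((q * z i) * y i)) := by
          rw [mul_assoc]
      _ = ε (p * ((∑ j ∈ s, ε ((q * z i) * y j) • z j) * y i)) := by rw [← h1]
      _ = ∑ j ∈ s, ε (q * (z i * y j)) * ε (p * (z j * y i)) := by
          rw [Finset.sum_mul, Finset.mul_sum, map_sum]
          refine Finset.sum_congr rfl fun j _ => ?_
          rw [smul_mul_assoc, mul_smul_comm, map_smul, smul_eq_mul, mul_assoc]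
  have lsym : ∀ p q : A, ∑ i ∈ s, ε (p * (q * (z i * y i)))
      = ∑ i ∈ s, ε (q * (p * (z i * y i))) := by
    intro p q
    rw [key p q, key q p, Finset.sum_comm]
    exact Finset.sum_congr rfl fun i _ => Finset.sum_congr rfl fun j _ => mul_comm _ _
  -- σ a * w = w * a
  have hC : ∀ a : A, σ a * w = w * a := by
    intro a
    have h0 : ∀ x : A, ε (x * (σ a * w - w * a)) = 0 := by
      intro x
      have e1 : ε (x * (σ a * w)) = ∑ i ∈ s, ε (x * (σ a * (z i * y i))) := by
        rw [hw, Finset.mul_sum, Finset.mul_sum, map_sum]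
      have e2 : ε (x * (w * a)) = ∑ i ∈ s, ε (σ a * (x * (z i * y i))) := by
        rw [hw, Finset.sum_mul, Finset.mul_sum, map_sum]
        refine Finset.sum_congr rfl fun i _ => ?_
        rw [← hσ (x * (z i * y i)) a]
        congr 1
        simp [mul_assoc]
      rw [mul_sub, map_sub, e1, e2, lsym x (σ a), sub_self]
    have := hnd₂ _ h0
    exact sub_eq_zero.mp this
  -- the quotient by the left ideal A·w
  set I : Submodule ℂ A := (Submodule.span A {w}).restrictScalars ℂ with hI
  have hmemI : ∀ v : A, v ∈ I ↔ ∃ c : A, c * w = v := by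
    intro v
    rw [hI, Submodule.restrictScalars_mem, Submodule.mem_span_singleton]
    simp [smul_eq_mul]
  have hIle : ∀ x : A, I ≤ I.comap (LinearMap.mulLeft ℂ x) := by
    intro x v hv
    obtain ⟨c, rfl⟩ := (hmemI v).mp hv
    refine Submodule.mem_comap.mpr ((hmemI _).mpr ⟨x * c, ?_⟩)
    simp [LinearMap.mulLeft_apply, mul_assoc]
  set T : A → (A ⧸ I) →ₗ[ℂ] (A ⧸ I) := fun x => Submodule.mapQ I I (LinearMap.mulLeft ℂ x) (hIle x) with hT
  have hTmk : ∀ (x a : A), T x (Submodule.Quotient.mk a) = Submodule.Quotient.mk (x * a) := by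
    intro x a
    simp [hT, Submodule.mapQ_apply, LinearMap.mulLeft_apply]
  have hTw : ∀ a : A, T w (Submodule.Quotient.mk a) = 0 := by
    intro a
    rw [hTmk, Submodule.Quotient.mk_eq_zero]
    exact (hmemI _).mpr ⟨σ a, hC a⟩
  -- trace argument: finrank of the quotient is 0
  have h1 : (LinearMap.id : (A ⧸ I) →ₗ[ℂ] (A ⧸ I)) = R • ∑ i ∈ s, (T (y i)) * (T (z i)) := by
    apply LinearMap.ext
    intro m
    obtain ⟨a, rfl⟩ := Submodule.Quotient.mk_surjective I m
    have e : ∀ i ∈ s, (T (y i) * T (z i)) (Submodule.Quotient.mk a) = I.mkQ (y i * z i * a) := by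
      intro i _
      show T (y i) (T (z i) (Submodule.Quotient.mk a)) = _
      rw [hTmk, hTmk, mul_assoc]
      rfl
    rw [LinearMap.id_apply, LinearMap.smul_apply, LinearMap.sum_apply, Finset.sum_congr rfl e,
      ← map_sum, ← map_smul]
    show I.mkQ a = _
    congr 1
    rw [← Finset.sum_mul, ← smul_mul_assoc, hunit, one_mul]
  have hzero : (∑ i ∈ s, (T (z i)) * (T (y i))) = 0 := by
    apply LinearMap.ext
    intro m
    obtain ⟨a, rfl⟩ := Submodule.Quotient.mk_surjective I m
    rw [LinearMap.sum_apply, LinearMap.zero_apply]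
    have : ∀ i ∈ s, ((T (z i)) * (T (y i))) (Submodule.Quotient.mk a)
        = Submodule.Quotient.mk (z i * y i * a) := by
      intro i _
      show T (z i) (T (y i) (Submodule.Quotient.mk a)) = _
      rw [hTmk, hTmk, mul_assoc]
    have this' : ∀ i ∈ s, ((T (z i)) * (T (y i))) (Submodule.Quotient.mk a) = I.mkQ (z i * y i * a) := by
      intro i hi
      rw [this i hi]; rfl
    rw [Finset.sum_congr rfl this', ← map_sum]
    have : ∑ i ∈ s, z i * y i * a = w * a := by rw [hw, Finset.sum_mul]
    rw [this]
    show Submodule.Quotient.mk (w * a) = 0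
    rw [Submodule.Quotient.mk_eq_zero]
    exact (hmemI _).mpr ⟨σ a, hC a⟩
  have htr : (Module.finrank ℂ (A ⧸ I) : ℂ) = 0 := by
    have := congrArg (LinearMap.trace ℂ (A ⧸ I)) h1
    rw [LinearMap.trace_id, map_smul, map_sum] at this
    have h3 : ∑ i ∈ s, LinearMap.trace ℂ (A ⧸ I) ((T (y i)) * (T (z i)))
        = ∑ i ∈ s, LinearMap.trace ℂ (A ⧸ I) ((T (z i)) * (T (y i))) :=
      Finset.sum_congr rfl fun i _ => LinearMap.trace_mul_comm ℂ _ _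
    rw [h3, ← map_sum, hzero, map_zero, smul_zero] at this
    exact this
  have hfr : Module.finrank ℂ (A ⧸ I) = 0 := by exact_mod_cast htr
  have hsub : Subsingleton (A ⧸ I) := Module.finrank_zero_iff.mp hfr
  have h1mem : (1 : A) ∈ I := by
    rw [← Submodule.Quotient.mk_eq_zero]
    exact Subsingleton.elim _ _
  obtain ⟨c, hc⟩ := (hmemI 1).mp h1mem
  -- w is invertible
  have hinj : Function.Injective (LinearMap.mulLeft ℂ w) := by
    intro a b hab
    have hab' : w * a = w * b := hab
    calc a = c * w * a := by rw [hc, one_mul]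
      _ = c * w * b := by rw [mul_assoc, hab', ← mul_assoc]
      _ = b := by rw [hc, one_mul]
  obtain ⟨v, hv⟩ := (LinearMap.injective_iff_surjective.mp hinj) 1
  have hwv : w * v = 1 := hv
  have hvw : v * w = 1 := by
    have : c = v := by
      calc c = c * (w * v) := by rw [hwv, mul_one]
        _ = c * w * v := by rw [mul_assoc]
        _ = v := by rw [hc, one_mul]
    rw [← this]; exact hc
  refine ⟨⟨v, w, hvw, hwv⟩, fun a => ?_⟩
  have : (↑(⟨v, w, hvw, hwv⟩ : Aˣ)⁻¹ : A) = w := rfl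
  rw [this]
  show σ a = w * a * v
  calc σ a = σ a * (w * v) := by rw [hwv, mul_one]
    _ = σ a * w * v := by rw [mul_assoc]
    _ = w * a * v := by rw [hC a]
end

section
/- Let n ≥ 1 and let R be a nonzero real number. Regard A = Mₙ(ℂ) as an algebra over ℝ with Frobenius form ε(a) = 2Rn·Re(Tr(a)), and define z = (2Rn)⁻² · Σ_{w,t ∈ {1,i}} Σ_{l,m,r,s=1}^{n} (w·e_{lm})·(t·e_{rs})·(w̄·e_{ml})·(t̄·e_{sr}), where i is the imaginary unit and w̄ denotes complex conjugation of the scalar w. Then z = (Rn)⁻²·1, and for every natural number g, R·ε(z^g) = 2·R^{2−2g}·n^{2−2g}. -/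
open Matrix

/-- For the FHK state sum model on `Mₙ(ℂ)` regarded as a real algebra, with Frobenius form
`ε(a) = 2Rn·Re(Tr a)` and handle element
`z = (2Rn)⁻² ∑_{w,t ∈ {1,i}} ∑_{l,m,r,s} (w e_{lm})(t e_{rs})(w̄ e_{ml})(t̄ e_{sr})`,
one has `z = (Rn)⁻² • 1` and `R ε(z^g) = 2·R^{2−2g}·n^{2−2g}`. -/
theorem fhk_partition_function_complex_as_real_algebra
    (n : ℕ) (hn : 1 ≤ n) (R : ℝ) (hR : R ≠ 0)
    (u : Fin 2 → ℂ) (hu : u = ![1, Complex.I])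
    (z : Matrix (Fin n) (Fin n) ℂ)
    (hz : z = (((2 * R * (n : ℝ) : ℝ) : ℂ) ^ (-2 : ℤ)) •
        ∑ w : Fin 2, ∑ t : Fin 2, ∑ l : Fin n, ∑ m : Fin n, ∑ r : Fin n, ∑ s : Fin n,
          (u w • single l m (1 : ℂ)) * (u t • single r s 1) *
            ((starRingEnd ℂ) (u w) • single m l 1) *
            ((starRingEnd ℂ) (u t) • single s r 1)) :
    z = (((R * (n : ℝ) : ℝ) : ℂ) ^ (-2 : ℤ)) • (1 : Matrix (Fin n) (Fin n) ℂ) ∧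
      ∀ g : ℕ, R * (2 * R * (n : ℝ) * ((z ^ g).trace).re)
        = 2 * R ^ ((2 : ℤ) - 2 * (g : ℤ)) * (n : ℝ) ^ ((2 : ℤ) - 2 * (g : ℤ)) := by
  have hn0 : (n : ℝ) ≠ 0 := by positivity
  have key : ∑ l : Fin n, ∑ m : Fin n, ∑ r : Fin n, ∑ s : Fin n,
      (single l m (1:ℂ)) * single r s 1 * single m l 1 *
        single s r 1 = (1 : Matrix (Fin n) (Fin n) ℂ) := by
    ext i j
    simp [Matrix.sum_apply, Matrix.mul_apply, single, ite_and, Matrix.one_apply]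
  have hz' : z = (((R * (n : ℝ) : ℝ) : ℂ) ^ (-2 : ℤ)) • (1 : Matrix (Fin n) (Fin n) ℂ) := by
    rw [hz]
    simp only [smul_mul_assoc, mul_smul_comm, ← Finset.smul_sum]
    rw [key]
    rw [hu]
    simp only [Fin.sum_univ_two, Matrix.cons_val_zero, Matrix.cons_val_one, Matrix.head_cons,
      _root_.map_one, Complex.conj_I, smul_smul, ← add_smul]
    congr 1
    have h2 : ((R:ℝ) * n) ≠ 0 := mul_ne_zero hR hn0
    have h2' : (((R * (n:ℝ)):ℝ):ℂ) ≠ 0 := Complex.ofReal_ne_zero.2 h2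
    have h1 : (((2 * R * (n:ℝ)):ℝ):ℂ) ≠ 0 := by
      rw [Complex.ofReal_ne_zero]; positivity
    push_cast at h2' h1 ⊢
    ring_nf
    rw [Complex.I_sq, show Complex.I ^ 4 = 1 by norm_num [pow_succ, Complex.I_mul_I],
      mul_zpow]
    have h4 : (2:ℂ) ^ (-2:ℤ) * 4 = 1 := by norm_num
    linear_combination (((R:ℂ) * ↑n) ^ (-2:ℤ)) * h4
  refine ⟨hz', ?_⟩
  intro g
  rw [hz']
  rw [smul_pow, one_pow, trace_smul, trace_one, smul_eq_mul]
  have hre : ((((R * (n:ℝ) : ℝ) : ℂ) ^ (-2 : ℤ)) ^ g * (n : ℂ)).re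
      = ((R * n) ^ (-2 : ℤ)) ^ g * n := by
    rw [← Complex.ofReal_zpow, ← Complex.ofReal_pow, ← Complex.ofReal_natCast,
      ← Complex.ofReal_mul, Complex.ofReal_re]
  simp only [Fintype.card_fin]
  rw [hre]
  have hRn : R * (n:ℝ) ≠ 0 := mul_ne_zero hR hn0
  rw [← zpow_natCast ((R * (n:ℝ)) ^ (-2 : ℤ)), ← _root_.zpow_mul, mul_zpow,
    zpow_sub₀ hR, zpow_sub₀ hn0]
  simp only [neg_mul, _root_.zpow_neg]
  field_simp
  try ring_nf
  try rfl
  try ring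
end
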